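/- Let x ∈ ℝⁿ, n ≥ 2, and let E ⊆ ℝⁿ be a Borel set with x ∉ E. Let Π(y) = (y−x)/|y−x|. Then H^{n−1}(Π(E)) ≤ 2ⁿ ∫_E |x−y|^{−(n−1)} dH^{n−1}(y). -/

import Mathlib

open Set MeasureTheory

open scoped RealInnerProductSpace ENNReal NNReal

/-- Radial projection is `r⁻¹`-Lipschitz outside the ball of radius `r`. -/
lemma radial_lip_aux {F : Type*} [NormedAddCommGroup F] [InnerProductSpace ℝ F]
    {r : ℝ} (hr : 0 < r) {a b : F} (ha : r ≤ ‖a‖) (hb : r ≤ ‖b‖) :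
    ‖‖a‖⁻¹ • a - ‖b‖⁻¹ • b‖ ≤ r⁻¹ * ‖a - b‖ := by
  have ha0 : 0 < ‖a‖ := hr.trans_le ha
  have hb0 : 0 < ‖b‖ := hr.trans_le hb
  set u := ‖a‖⁻¹ • a with hu_def
  set v := ‖b‖⁻¹ • b with hv_def
  have hu : ‖u‖ = 1 := by
    rw [hu_def, norm_smul, Real.norm_eq_abs, abs_of_pos (inv_pos.2 ha0),
      inv_mul_cancel₀ ha0.ne']
  have hv : ‖v‖ = 1 := by
    rw [hv_def, norm_smul, Real.norm_eq_abs, abs_of_pos (inv_pos.2 hb0),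
      inv_mul_cancel₀ hb0.ne']
  have ht : (inner ℝ u v : ℝ) ≤ 1 := by
    calc (inner ℝ u v : ℝ) ≤ ‖u‖ * ‖v‖ := real_inner_le_norm u v
    _ = 1 := by rw [hu, hv, one_mul]
  have hab : (inner ℝ a b : ℝ) = ‖a‖ * ‖b‖ * (inner ℝ u v : ℝ) := by
    rw [hu_def, hv_def, real_inner_smul_left, real_inner_smul_right]
    field_simp
  have h1 : r ^ 2 ≤ ‖a‖ * ‖b‖ := by
    calc r ^ 2 = r * r := sq r
    _ ≤ ‖a‖ * ‖b‖ := mul_le_mul ha hb hr.le ha0.le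
  have hsq : (r * ‖u - v‖) ^ 2 ≤ ‖a - b‖ ^ 2 := by
    rw [mul_pow, norm_sub_sq_real, norm_sub_sq_real, hu, hv, hab]
    nlinarith [sq_nonneg (‖a‖ - ‖b‖),
      mul_nonneg (sub_nonneg.2 h1) (sub_nonneg.2 ht)]
  have hle : r * ‖u - v‖ ≤ ‖a - b‖ := by
    have h2 := Real.sqrt_le_sqrt hsq
    rwa [Real.sqrt_sq (by positivity), Real.sqrt_sq (by positivity)] at h2
  calc ‖u - v‖ = r⁻¹ * (r * ‖u - v‖) := by field_simp
  _ ≤ r⁻¹ * ‖a - b‖ := by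
      exact mul_le_mul_of_nonneg_left hle (by positivity)

/-- For a Borel set E ⊆ ℝⁿ with x ∉ E,
H^{n−1}(Π(E)) ≤ 2ⁿ ∫_E |x−y|^{−(n−1)} dH^{n−1}(y), where Π(y) = (y−x)/|y−x|. -/
theorem stmt3 {n : ℕ} (hn : 2 ≤ n) (x : EuclideanSpace ℝ (Fin n))
    (E : Set (EuclideanSpace ℝ (Fin n))) (hE : MeasurableSet E) (hx : x ∉ E) :
    μH[(n:ℝ) - 1] ((fun y => ‖y - x‖⁻¹ • (y - x)) '' E) ≤
      2 ^ n * ∫⁻ y in E, ENNReal.ofReal (‖x - y‖ ^ (-((n:ℝ) - 1))) ∂(μH[(n:ℝ) - 1]) := by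
  have hn2 : (2:ℝ) ≤ (n:ℝ) := by exact_mod_cast hn
  set d : ℝ := (n:ℝ) - 1 with hd_def
  have hd0 : 0 ≤ d := by rw [hd_def]; linarith
  set f : EuclideanSpace ℝ (Fin n) → EuclideanSpace ℝ (Fin n) :=
    fun y => ‖y - x‖⁻¹ • (y - x) with hf_def
  set g : EuclideanSpace ℝ (Fin n) → ℝ≥0∞ :=
    fun y => ENNReal.ofReal (‖x - y‖ ^ (-d)) with hg_def
  set A : ℤ → Set (EuclideanSpace ℝ (Fin n)) :=
    fun k => E ∩ {y | ‖y - x‖ ∈ Ico ((2:ℝ) ^ k) ((2:ℝ) ^ (k + 1))} with hA_def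
  have hnorm_meas : Measurable fun y : EuclideanSpace ℝ (Fin n) => ‖y - x‖ :=
    (continuous_id.sub continuous_const).norm.measurable
  have hAmeas : ∀ k, MeasurableSet (A k) := fun k =>
    hE.inter (hnorm_meas measurableSet_Ico)
  have hdisj : Pairwise (Function.onFun Disjoint A) := by
    intro k l hkl
    rw [Function.onFun, Set.disjoint_left]
    rintro y ⟨-, h1, h2⟩ ⟨-, h3, h4⟩
    rcases lt_or_gt_of_ne hkl with h | h
    · have : (2:ℝ) ^ (k + 1) ≤ 2 ^ l := zpow_le_zpow_right₀ one_le_two (by omega)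
      linarith
    · have : (2:ℝ) ^ (l + 1) ≤ 2 ^ k := zpow_le_zpow_right₀ one_le_two (by omega)
      linarith
  have hEun : E = ⋃ k, A k := by
    apply Subset.antisymm
    · intro y hy
      have hy0 : (0:ℝ) < ‖y - x‖ := by
        rw [norm_pos_iff, sub_ne_zero]
        rintro rfl
        exact hx hy
      obtain ⟨k, hk⟩ := exists_mem_Ico_zpow hy0 one_lt_two
      exact mem_iUnion.2 ⟨k, hy, hk⟩
    · exact iUnion_subset fun k => inter_subset_left
  -- Lipschitz bound on each annulus
  have hlip : ∀ k : ℤ, LipschitzOnWith ((2:ℝ≥0) ^ (-k)) f (A k) := by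
    intro k
    apply LipschitzOnWith.of_dist_le_mul
    intro y hy z hz
    have h1 : (2:ℝ) ^ k ≤ ‖y - x‖ := hy.2.1
    have h2 : (2:ℝ) ^ k ≤ ‖z - x‖ := hz.2.1
    have hr : (0:ℝ) < (2:ℝ) ^ k := by positivity
    have key := radial_lip_aux hr h1 h2
    rw [sub_sub_sub_cancel_right] at key
    have hK : ((2 ^ (-k) : ℝ≥0) : ℝ) = ((2:ℝ) ^ k)⁻¹ := by
      push_cast
      rw [zpow_neg]
    rw [dist_eq_norm, dist_eq_norm, hK]
    exact key
  -- per-annulus estimate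
  have key : ∀ k : ℤ, μH[d] (f '' A k) ≤ 2 ^ n * ∫⁻ y in A k, g y ∂(μH[d]) := by
    intro k
    have step1 := (hlip k).hausdorffMeasure_image_le hd0 (s := A k)
    have step2 : ENNReal.ofReal (((2:ℝ) ^ (k + 1)) ^ (-d)) * μH[d] (A k)
        ≤ ∫⁻ y in A k, g y ∂(μH[d]) := by
      rw [← setLIntegral_const]
      apply setLIntegral_mono' (hAmeas k)
      intro y hy
      apply ENNReal.ofReal_le_ofReal
      have hxy : (0:ℝ) < ‖x - y‖ := by
        rw [norm_sub_rev]
        exact lt_of_lt_of_le (by positivity) hy.2.1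
      have hxy2 : ‖x - y‖ ≤ (2:ℝ) ^ (k + 1) := by
        rw [norm_sub_rev]
        exact hy.2.2.le
      exact Real.rpow_le_rpow_of_nonpos hxy hxy2 (by linarith)
    have hcoef : (((2:ℝ≥0) ^ (-k) : ℝ≥0) : ℝ≥0∞) ^ d
        ≤ 2 ^ n * ENNReal.ofReal (((2:ℝ) ^ (k + 1)) ^ (-d)) := by
      have e1 : (((2:ℝ≥0) ^ (-k) : ℝ≥0) : ℝ≥0∞) = ENNReal.ofReal ((2:ℝ) ^ (-k)) := by
        rw [← ENNReal.ofReal_coe_nnreal]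
        push_cast
        ring_nf
      have e2 : ((2:ℝ≥0∞) ^ n) = ENNReal.ofReal ((2:ℝ) ^ n) := by
        rw [ENNReal.ofReal_pow (by norm_num), ENNReal.ofReal_ofNat]
      rw [e1, e2, ENNReal.ofReal_rpow_of_pos (by positivity),
        ← ENNReal.ofReal_mul (by positivity)]
      apply ENNReal.ofReal_le_ofReal
      rw [← Real.rpow_intCast 2 (-k), ← Real.rpow_intCast 2 (k + 1),
        ← Real.rpow_natCast 2 n, ← Real.rpow_mul (by norm_num),
        ← Real.rpow_mul (by norm_num), ← Real.rpow_add (by norm_num)]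
      rw [Real.rpow_le_rpow_left_iff one_lt_two]
      push_cast
      rw [hd_def]
      ring_nf
      nlinarith [hn2]
    calc μH[d] (f '' A k) ≤ (((2:ℝ≥0) ^ (-k) : ℝ≥0) : ℝ≥0∞) ^ d * μH[d] (A k) := step1
    _ ≤ (2 ^ n * ENNReal.ofReal (((2:ℝ) ^ (k + 1)) ^ (-d))) * μH[d] (A k) :=
        by gcongr
    _ = 2 ^ n * (ENNReal.ofReal (((2:ℝ) ^ (k + 1)) ^ (-d)) * μH[d] (A k)) := by ring
    _ ≤ 2 ^ n * ∫⁻ y in A k, g y ∂(μH[d]) := by gcongr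
  calc μH[d] (f '' E) = μH[d] (⋃ k, f '' A k) := by rw [hEun, image_iUnion]
  _ ≤ ∑' k : ℤ, μH[d] (f '' A k) := measure_iUnion_le _
  _ ≤ ∑' k : ℤ, 2 ^ n * ∫⁻ y in A k, g y ∂(μH[d]) := ENNReal.tsum_le_tsum key
  _ = 2 ^ n * ∑' k : ℤ, ∫⁻ y in A k, g y ∂(μH[d]) := ENNReal.tsum_mul_left
  _ = 2 ^ n * ∫⁻ y in E, g y ∂(μH[d]) := by
      rw [hEun, lintegral_iUnion hAmeas hdisj]
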